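/- Let k have characteristic 2 and consider the involutary G-algebra (End(kG), σ) with σ the adjoint of B₁. A k-basis of the σ-invariant elements of E_G(kG) ≅ kG^{op} is given by r(1), r(t₁),…,r(t_m), r(g₁+g₁⁻¹),…,r(g_n+g_n⁻¹), where t₁,…,t_m are the involutions of G and {g_j, g_j⁻¹} run over the pairs of non-involutive non-identity elements. The elements r(1) and r(g_j+g_j⁻¹) lie in the image of tr₁^G applied to σ-invariant elements of End(kG); and r(t_i) = tr_{⟨t_i⟩}^G(t_i⊗1 + 1⊗t_i) with t_i⊗1 + 1⊗t_i being σ-invariant. -/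

import Mathlib

open scoped Classical

/-- The contragredient map of a group algebra. -/
noncomputable def contra16 (k G : Type*) [Field k] [Group G] :
    MonoidAlgebra k G →ₗ[k] MonoidAlgebra k G :=
  MonoidAlgebra.mapDomainLinearMap k k (fun g : G => g⁻¹)

/-- The rank-one endomorphism `x ⊗ y` of `kG`: `z ↦ B₁(y, z) • x`. -/
noncomputable def rankOne16 {k G : Type*} [Field k] [Group G] [Fintype G]
    (x y : MonoidAlgebra k G) : MonoidAlgebra k G →ₗ[k] MonoidAlgebra k G where
  toFun z := (∑ g : G, y.coeff g * z.coeff g) • x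
  map_add' z z' := by
    have h : ∀ g : G, (z + z').coeff g = z.coeff g + z'.coeff g := fun g => rfl
    simp [h, mul_add, Finset.sum_add_distrib, add_smul]
  map_smul' c z := by
    have h : ∀ g : G, (c • z).coeff g = c * z.coeff g := fun g => rfl
    simp [h, smul_smul, Finset.mul_sum, mul_left_comm]

section helpers16
set_option linter.unusedSectionVars false
variable {k G : Type*} [Field k] [Group G] [Fintype G]

lemma rankOne16_apply (x y z : MonoidAlgebra k G) :
    rankOne16 x y z = (∑ g : G, y.coeff g * z.coeff g) • x := rfl
lemma ma_add_apply16 (u v : MonoidAlgebra k G) (g : G) : (u + v).coeff g = u.coeff g + v.coeff g :=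
  Finsupp.add_apply u.coeff v.coeff g
lemma ma_smul_apply16 (c : k) (u : MonoidAlgebra k G) (g : G) : (c • u).coeff g = c * u.coeff g :=
  Finsupp.smul_apply c u.coeff g
lemma ma_single_apply16 (a : G) (b : k) (c : G) :
    (MonoidAlgebra.single a b).coeff c = if a = c then b else 0 := Finsupp.single_apply
lemma ma_sum_apply16 {ι : Type*} (s : Finset ι) (f : ι → MonoidAlgebra k G) (g : G) :
    (∑ i ∈ s, f i).coeff g = ∑ i ∈ s, (f i).coeff g := by
  rw [MonoidAlgebra.coeff_sum, Finsupp.finset_sum_apply]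
lemma ma_one_apply16 (g : G) : (1 : MonoidAlgebra k G).coeff g = if 1 = g then 1 else 0 := by
  rw [MonoidAlgebra.one_def]; exact ma_single_apply16 1 1 g

attribute [local simp] rankOne16_apply ma_add_apply16 ma_smul_apply16 ma_single_apply16
  ma_sum_apply16 ma_one_apply16 Finsupp.single_apply

lemma eval_of16 (w : MonoidAlgebra k G) (h : G) :
    ∑ g : G, w.coeff g * (MonoidAlgebra.of k G h).coeff g = w.coeff h := by
  simp [MonoidAlgebra.of_apply, mul_ite, Finset.sum_ite_eq]

lemma eval_of16' (w : MonoidAlgebra k G) (h : G) :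
    ∑ g : G, (MonoidAlgebra.of k G h).coeff g * w.coeff g = w.coeff h := by
  simp [MonoidAlgebra.of_apply, ite_mul, Finset.sum_ite_eq]

lemma eval_one16 (w : MonoidAlgebra k G) : ∑ g : G, (1 : MonoidAlgebra k G).coeff g * w.coeff g = w.coeff 1 := by
  simp [ite_mul, Finset.sum_ite_eq]

lemma eval_one16' (w : MonoidAlgebra k G) : ∑ g : G, w.coeff g * (1 : MonoidAlgebra k G).coeff g = w.coeff 1 := by
  simp [mul_ite, Finset.sum_ite_eq]

lemma adj_unique16
    (σ : (MonoidAlgebra k G →ₗ[k] MonoidAlgebra k G) →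
        (MonoidAlgebra k G →ₗ[k] MonoidAlgebra k G))
    (hσ : ∀ (f : MonoidAlgebra k G →ₗ[k] MonoidAlgebra k G) (u v : MonoidAlgebra k G),
      (∑ g : G, u.coeff g * (f v).coeff g) = ∑ g : G, (σ f u).coeff g * v.coeff g)
    (f : MonoidAlgebra k G →ₗ[k] MonoidAlgebra k G)
    (hf : ∀ u v : MonoidAlgebra k G, ∑ g : G, u.coeff g * (f v).coeff g = ∑ g : G, (f u).coeff g * v.coeff g) :
    σ f = f := by
  refine LinearMap.ext fun u => MonoidAlgebra.ext (Finsupp.ext fun h => ?_)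
  have h1 : ∑ g : G, (σ f u).coeff g * (MonoidAlgebra.of k G h).coeff g
      = ∑ g : G, (f u).coeff g * (MonoidAlgebra.of k G h).coeff g :=
    (hσ f u _).symm.trans (hf u _)
  rw [eval_of16, eval_of16] at h1
  exact h1

lemma sa_single16 (a : G) (ha : a * a = 1) (u v : MonoidAlgebra k G) :
    ∑ g : G, u.coeff g * (v * MonoidAlgebra.single a (1:k)).coeff g
      = ∑ g : G, (u * MonoidAlgebra.single a (1:k)).coeff g * v.coeff g := by
  have hainv : a⁻¹ = a := inv_eq_of_mul_eq_one_right ha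
  simp only [MonoidAlgebra.mul_single_apply, hainv, mul_one]
  exact Fintype.sum_equiv (Equiv.mulRight a) (fun g => u.coeff g * v.coeff (g * a))
    (fun g => u.coeff (g * a) * v.coeff g) (fun g => by simp [mul_assoc, ha])

lemma sa_pair16 (a : G) (u v : MonoidAlgebra k G) :
    ∑ g : G, u.coeff g * ((v * (MonoidAlgebra.single a (1:k) + MonoidAlgebra.single a⁻¹ 1)
        : MonoidAlgebra k G)).coeff g
      = ∑ g : G, ((u * (MonoidAlgebra.single a (1:k) + MonoidAlgebra.single a⁻¹ 1)
        : MonoidAlgebra k G)).coeff g * v.coeff g := by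
  simp only [mul_add, add_mul, ma_add_apply16, MonoidAlgebra.mul_single_apply, mul_one, inv_inv,
    Finset.sum_add_distrib]
  rw [add_comm]
  congr 1
  · exact Fintype.sum_equiv (Equiv.mulRight a) (fun g => u.coeff g * v.coeff (g * a))
      (fun g => u.coeff (g * a⁻¹) * v.coeff g) (fun g => by simp [mul_assoc])
  · exact Fintype.sum_equiv (Equiv.mulRight a⁻¹) (fun g => u.coeff g * v.coeff (g * a⁻¹))
      (fun g => u.coeff (g * a) * v.coeff g) (fun g => by simp [mul_assoc])

lemma ma_decomp16 (u : MonoidAlgebra k G) :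
    u = ∑ g : G, MonoidAlgebra.single g (u.coeff g) := by
  refine MonoidAlgebra.ext (Finsupp.ext fun h => ?_)
  simp [Finset.sum_ite_eq]

lemma comm_mulRight16 (f : MonoidAlgebra k G →ₗ[k] MonoidAlgebra k G)
    (hcomm : ∀ (x : G) (y : MonoidAlgebra k G),
      f (MonoidAlgebra.of k G x * y) = MonoidAlgebra.of k G x * f y) :
    f = LinearMap.mulRight k (f 1) := by
  refine LinearMap.ext fun u => ?_
  conv_lhs => rw [ma_decomp16 u]
  rw [map_sum, LinearMap.mulRight_apply]
  conv_rhs => rw [ma_decomp16 u]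
  rw [Finset.sum_mul]
  refine Finset.sum_congr rfl fun g _ => ?_
  have h1 : MonoidAlgebra.single g (u.coeff g) = u.coeff g • MonoidAlgebra.of k G g := by
    rw [MonoidAlgebra.of_apply, MonoidAlgebra.smul_single', mul_one]
  rw [h1, map_smul, smul_mul_assoc]
  congr 1
  have := hcomm g 1
  rw [mul_one] at this
  exact this

lemma mulRight_add16 (a b : MonoidAlgebra k G) :
    LinearMap.mulRight k (a + b) = LinearMap.mulRight k a + LinearMap.mulRight k b := by
  refine LinearMap.ext fun u => ?_
  simp [LinearMap.mulRight_apply, mul_add]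

lemma mulRight_smul16 (c : k) (a : MonoidAlgebra k G) :
    LinearMap.mulRight k (c • a) = c • LinearMap.mulRight k a := by
  refine LinearMap.ext fun u => ?_
  simp [LinearMap.mulRight_apply, mul_smul_comm]

lemma mulRight_sum16 {ι : Type*} (s : Finset ι) (f : ι → MonoidAlgebra k G) :
    LinearMap.mulRight k (∑ i ∈ s, f i) = ∑ i ∈ s, LinearMap.mulRight k (f i) := by
  refine LinearMap.ext fun u => ?_
  simp [LinearMap.mulRight_apply, Finset.mul_sum, LinearMap.sum_apply]

lemma key16 {m n : ℕ} (t : Fin m → G) (gp : Fin n → G)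
    (htinv : ∀ i, t i * t i = 1 ∧ t i ≠ 1)
    (htinj : Function.Injective t)
    (hgp : ∀ j, gp j * gp j ≠ 1)
    (hgp1 : ∀ j, gp j ≠ 1)
    (hgpinj : ∀ j j' : Fin n, (gp j = gp j' ∨ gp j = (gp j')⁻¹) → j = j')
    (c0 : k) (ci : Fin m → k) (cj : Fin n → k)
    (y : MonoidAlgebra k G)
    (hy : y = c0 • (1 : MonoidAlgebra k G)
        + (∑ i : Fin m, ci i • MonoidAlgebra.single (t i) 1)
        + ∑ j : Fin n, cj j • (MonoidAlgebra.single (gp j) 1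
            + MonoidAlgebra.single (gp j)⁻¹ 1)) :
    y.coeff 1 = c0 ∧ (∀ i, y.coeff (t i) = ci i) ∧ (∀ j, y.coeff (gp j) = cj j) ∧
      (∀ j, y.coeff ((gp j)⁻¹) = cj j) := by
  have htne1 : ∀ i, t i ≠ 1 := fun i => (htinv i).2
  have htself : ∀ i, (t i)⁻¹ = t i := fun i => inv_eq_of_mul_eq_one_right (htinv i).1
  have hgpinv1 : ∀ j, (gp j)⁻¹ ≠ 1 := fun j => fun h => hgp1 j (by
    rw [← inv_inv (gp j), h, inv_one])
  have htgp : ∀ i j, gp j ≠ t i := fun i j h => hgp j (by rw [h]; exact (htinv i).1)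
  have htgpinv : ∀ i j, (gp j)⁻¹ ≠ t i := fun i j h => htgp i j (by
    rw [← inv_inv (gp j), h, htself])
  have hgg : ∀ j j', j ≠ j' → gp j ≠ gp j' := fun j j' hne h =>
    hne (hgpinj j j' (Or.inl h))
  have hggi : ∀ j j', (gp j)⁻¹ = gp j' → j = j' :=
    fun j j' h => (hgpinj j' j (Or.inr h.symm)).symm
  have hgginv : ∀ j, gp j ≠ (gp j)⁻¹ := fun j h => hgp j (by
    nth_rewrite 2 [h]
    exact mul_inv_cancel _)
  subst hy
  refine ⟨?_, ?_, ?_, ?_⟩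
  · simp only [ma_add_apply16, ma_smul_apply16, ma_one_apply16, ma_sum_apply16,
      ma_single_apply16]
    rw [Finset.sum_eq_zero (fun i _ => by simp [htne1 i]),
      Finset.sum_eq_zero (fun j _ => by simp [hgp1 j, hgpinv1 j])]
    simp
  · intro i0
    simp only [ma_add_apply16, ma_smul_apply16, ma_one_apply16, ma_sum_apply16,
      ma_single_apply16]
    rw [Finset.sum_eq_single i0 (fun i _ hne => by
        have : t i ≠ t i0 := fun h => hne (htinj h)
        simp [this])
      (fun h => absurd (Finset.mem_univ i0) h)]
    rw [Finset.sum_eq_zero (fun j _ => by simp [htgp i0 j, htgpinv i0 j])]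
    simp [Ne.symm (htne1 i0)]
  · intro j0
    simp only [ma_add_apply16, ma_smul_apply16, ma_one_apply16, ma_sum_apply16,
      ma_single_apply16]
    rw [Finset.sum_eq_zero (fun i _ => by
      have : t i ≠ gp j0 := fun h => htgp i j0 h.symm
      simp [this])]
    rw [Finset.sum_eq_single j0 (fun j _ hne => by
        have h1 : gp j ≠ gp j0 := hgg j j0 hne
        have h2 : (gp j)⁻¹ ≠ gp j0 := fun h => hne (hggi j j0 (h.trans rfl))
        simp [h1, h2])
      (fun h => absurd (Finset.mem_univ j0) h)]
    have h3 : (gp j0)⁻¹ ≠ gp j0 := fun h => hgginv j0 h.symm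
    simp [Ne.symm (hgp1 j0), h3]
  · intro j0
    simp only [ma_add_apply16, ma_smul_apply16, ma_one_apply16, ma_sum_apply16,
      ma_single_apply16]
    rw [Finset.sum_eq_zero (fun i _ => by
      have : t i ≠ (gp j0)⁻¹ := fun h => htgpinv i j0 h.symm
      simp [this])]
    rw [Finset.sum_eq_single j0 (fun j _ hne => by
        have h1 : gp j ≠ (gp j0)⁻¹ := fun h => hne (hgpinj j j0 (Or.inr h))
        have h2 : (gp j)⁻¹ ≠ (gp j0)⁻¹ := fun h => hne (hgpinj j j0 (Or.inl (inv_injective h)))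
        simp [h1, h2])
      (fun h => absurd (Finset.mem_univ j0) h)]
    simp [Ne.symm (hgpinv1 j0), hgginv j0]

lemma sum_comm16 (a b : MonoidAlgebra k G) : ∑ g : G, a.coeff g * b.coeff g = ∑ g : G, b.coeff g * a.coeff g :=
  Finset.sum_congr rfl fun g _ => mul_comm _ _

lemma bil_key16 (a b c d : MonoidAlgebra k G) :
    ∑ g : G, a.coeff g * ((∑ h : G, b.coeff h * c.coeff h) * d.coeff g)
      = (∑ h : G, b.coeff h * c.coeff h) * ∑ g : G, a.coeff g * d.coeff g := by
  rw [Finset.mul_sum]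
  exact Finset.sum_congr rfl fun g _ => mul_left_comm _ _ _

lemma bil_key16' (a b c d : MonoidAlgebra k G) :
    ∑ g : G, ((∑ h : G, b.coeff h * c.coeff h) * d.coeff g) * a.coeff g
      = (∑ h : G, b.coeff h * c.coeff h) * ∑ g : G, a.coeff g * d.coeff g := by
  rw [Finset.mul_sum]
  exact Finset.sum_congr rfl fun g _ => by ring

lemma sa_rankpair16 (x y : MonoidAlgebra k G) (u v : MonoidAlgebra k G) :
    ∑ g : G, u.coeff g * ((rankOne16 x y + rankOne16 y x) v).coeff g
      = ∑ g : G, ((rankOne16 x y + rankOne16 y x) u).coeff g * v.coeff g := by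
  simp only [LinearMap.add_apply, rankOne16_apply, ma_add_apply16, ma_smul_apply16]
  simp only [mul_add, add_mul, Finset.sum_add_distrib]
  rw [bil_key16 u y v x, bil_key16 u x v y, bil_key16' v y u x, bil_key16' v x u y,
    sum_comm16 v x, sum_comm16 v y, sum_comm16 x u, sum_comm16 y u]
  ring

lemma sa_rank1116 (u v : MonoidAlgebra k G) :
    ∑ g : G, u.coeff g * ((rankOne16 (1 : MonoidAlgebra k G) 1) v).coeff g
      = ∑ g : G, ((rankOne16 (1 : MonoidAlgebra k G) 1) u).coeff g * v.coeff g := by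
  simp only [rankOne16_apply, ma_smul_apply16]
  rw [bil_key16 u 1 v 1, bil_key16' v 1 u 1, sum_comm16 v 1, sum_comm16 (1 : MonoidAlgebra k G) u]
  ring

lemma zpow_invol16 {a : G} (ha : a * a = 1) (n : ℤ) : a ^ n = 1 ∨ a ^ n = a := by
  have h2 : a ^ (2:ℤ) = 1 := by
    rw [show (2:ℤ) = 1 + 1 by norm_num, zpow_add, zpow_one, ha]
  rcases Int.even_or_odd n with ⟨r, hr⟩ | ⟨r, hr⟩
  · left; rw [hr, ← two_mul, zpow_mul, h2, one_zpow]
  · right; rw [hr, zpow_add, zpow_one, zpow_mul, h2, one_zpow, one_mul]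

lemma tr416 :
    (∑ g : G, (LinearMap.mulLeft k (MonoidAlgebra.of k G g)) ∘ₗ
        (rankOne16 (1 : MonoidAlgebra k G) 1) ∘ₗ
        (LinearMap.mulLeft k (MonoidAlgebra.of k G g⁻¹))) =
      LinearMap.mulRight k (1 : MonoidAlgebra k G) := by
  refine LinearMap.ext fun z => MonoidAlgebra.ext (Finsupp.ext fun h => ?_)
  rw [LinearMap.sum_apply, ma_sum_apply16]
  have hterm : ∀ g : G,
      ((LinearMap.mulLeft k (MonoidAlgebra.of k G g) ∘ₗ
        rankOne16 (1 : MonoidAlgebra k G) 1 ∘ₗ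
        LinearMap.mulLeft k (MonoidAlgebra.of k G g⁻¹)) z).coeff h
      = z.coeff g * (if g = h then 1 else 0) := by
    intro g
    rw [LinearMap.comp_apply, LinearMap.comp_apply, LinearMap.mulLeft_apply,
      LinearMap.mulLeft_apply, rankOne16_apply, eval_one16, MonoidAlgebra.of_apply,
      MonoidAlgebra.of_apply, MonoidAlgebra.single_mul_apply, one_mul,
      MonoidAlgebra.single_mul_apply, inv_inv, mul_one, one_mul]
    simp [eq_comm, inv_mul_eq_one]
  rw [Finset.sum_congr rfl (fun g _ => hterm g)]
  rw [LinearMap.mulRight_apply, mul_one]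
  simp [Finset.sum_ite_eq]

lemma trA16 (b : G) :
    (∑ g : G, (LinearMap.mulLeft k (MonoidAlgebra.of k G g)) ∘ₗ
        (rankOne16 (MonoidAlgebra.of k G b) (1 : MonoidAlgebra k G)) ∘ₗ
        (LinearMap.mulLeft k (MonoidAlgebra.of k G g⁻¹))) =
      LinearMap.mulRight k (MonoidAlgebra.of k G b) := by
  refine LinearMap.ext fun z => MonoidAlgebra.ext (Finsupp.ext fun h => ?_)
  rw [LinearMap.sum_apply, ma_sum_apply16]
  have hterm : ∀ g : G,
      ((LinearMap.mulLeft k (MonoidAlgebra.of k G g) ∘ₗ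
        rankOne16 (MonoidAlgebra.of k G b) (1 : MonoidAlgebra k G) ∘ₗ
        LinearMap.mulLeft k (MonoidAlgebra.of k G g⁻¹)) z).coeff h
      = z.coeff g * (if g = h * b⁻¹ then 1 else 0) := by
    intro g
    rw [LinearMap.comp_apply, LinearMap.comp_apply, LinearMap.mulLeft_apply,
      LinearMap.mulLeft_apply, rankOne16_apply, eval_one16, MonoidAlgebra.of_apply,
      MonoidAlgebra.of_apply, MonoidAlgebra.of_apply, MonoidAlgebra.single_mul_apply, one_mul,
      MonoidAlgebra.single_mul_apply, inv_inv, mul_one]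
    simp [eq_inv_mul_iff_mul_eq, ← eq_mul_inv_iff_mul_eq]
  rw [Finset.sum_congr rfl (fun g _ => hterm g)]
  rw [LinearMap.mulRight_apply, MonoidAlgebra.of_apply, MonoidAlgebra.mul_single_apply, mul_one]
  simp [mul_ite, Finset.sum_ite_eq']

lemma trB16 (b : G) :
    (∑ g : G, (LinearMap.mulLeft k (MonoidAlgebra.of k G g)) ∘ₗ
        (rankOne16 (1 : MonoidAlgebra k G) (MonoidAlgebra.of k G b)) ∘ₗ
        (LinearMap.mulLeft k (MonoidAlgebra.of k G g⁻¹))) =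
      LinearMap.mulRight k (MonoidAlgebra.of k G b⁻¹) := by
  refine LinearMap.ext fun z => MonoidAlgebra.ext (Finsupp.ext fun h => ?_)
  rw [LinearMap.sum_apply, ma_sum_apply16]
  have hterm : ∀ g : G,
      ((LinearMap.mulLeft k (MonoidAlgebra.of k G g) ∘ₗ
        rankOne16 (1 : MonoidAlgebra k G) (MonoidAlgebra.of k G b) ∘ₗ
        LinearMap.mulLeft k (MonoidAlgebra.of k G g⁻¹)) z).coeff h
      = z.coeff (g * b) * (if g = h then 1 else 0) := by
    intro g
    rw [LinearMap.comp_apply, LinearMap.comp_apply, LinearMap.mulLeft_apply,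
      LinearMap.mulLeft_apply, rankOne16_apply, eval_of16',
      MonoidAlgebra.of_apply, MonoidAlgebra.of_apply, MonoidAlgebra.single_mul_apply, one_mul,
      MonoidAlgebra.single_mul_apply, inv_inv]
    simp [eq_comm, inv_mul_eq_one]
  rw [Finset.sum_congr rfl (fun g _ => hterm g)]
  rw [LinearMap.mulRight_apply, MonoidAlgebra.of_apply, MonoidAlgebra.mul_single_apply,
    inv_inv, mul_one]
  simp [mul_ite, Finset.sum_ite_eq']

lemma hterm16 (b r : G) (z : MonoidAlgebra k G) (h : G) :
    ((LinearMap.mulLeft k (MonoidAlgebra.of k G r) ∘ₗ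
      (rankOne16 (MonoidAlgebra.of k G b) 1 + rankOne16 1 (MonoidAlgebra.of k G b)) ∘ₗ
      LinearMap.mulLeft k (MonoidAlgebra.of k G r⁻¹)) z).coeff h
    = z.coeff r * (if r = h * b⁻¹ then 1 else 0) + z.coeff (r * b) * (if r = h then 1 else 0) := by
  rw [LinearMap.comp_apply, LinearMap.comp_apply, LinearMap.mulLeft_apply,
    LinearMap.mulLeft_apply, LinearMap.add_apply, rankOne16_apply, rankOne16_apply,
    eval_one16, eval_of16', MonoidAlgebra.of_apply, MonoidAlgebra.of_apply,
    MonoidAlgebra.single_mul_apply, one_mul, ma_add_apply16,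
    MonoidAlgebra.single_mul_apply, inv_inv, mul_one,
    MonoidAlgebra.single_mul_apply, inv_inv]
  rw [ma_smul_apply16, ma_smul_apply16]
  have e1 : ((MonoidAlgebra.of k G b) : MonoidAlgebra k G).coeff (r⁻¹ * h)
      = (if r = h * b⁻¹ then 1 else 0 : k) := by
    simp [MonoidAlgebra.of_apply, eq_inv_mul_iff_mul_eq, ← eq_mul_inv_iff_mul_eq]
  have e2 : (1 : MonoidAlgebra k G).coeff (r⁻¹ * h) = (if r = h then 1 else 0 : k) := by
    simp [eq_comm, inv_mul_eq_one]
  rw [e1, e2]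
  ring

lemma tr616 (a : G) (ha : a * a = 1) (ha1 : a ≠ 1) :
    (∑ c : G ⧸ Subgroup.zpowers a,
      (LinearMap.mulLeft k (MonoidAlgebra.of k G (Quotient.out c))) ∘ₗ
        (rankOne16 (MonoidAlgebra.of k G a) 1 + rankOne16 1 (MonoidAlgebra.of k G a)) ∘ₗ
        (LinearMap.mulLeft k (MonoidAlgebra.of k G (Quotient.out c)⁻¹))) =
      LinearMap.mulRight k (MonoidAlgebra.of k G a) := by
  have hainv : a⁻¹ = a := inv_eq_of_mul_eq_one_right ha
  refine LinearMap.ext fun z => MonoidAlgebra.ext (Finsupp.ext fun h => ?_)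
  rw [LinearMap.sum_apply, ma_sum_apply16]
  refine Eq.trans (Finset.sum_congr rfl fun c _ => hterm16 a (Quotient.out c) z h) ?_
  rw [LinearMap.mulRight_apply, MonoidAlgebra.of_apply, MonoidAlgebra.mul_single_apply, mul_one]
  have houtmk : ∀ c : G ⧸ Subgroup.zpowers a, QuotientGroup.mk (Quotient.out c) = c :=
    fun c => Quotient.out_eq c
  rw [Finset.sum_eq_single (QuotientGroup.mk h : G ⧸ Subgroup.zpowers a)]
  · set r0 := Quotient.out (QuotientGroup.mk h : G ⧸ Subgroup.zpowers a) with hr0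
    have hmem : r0⁻¹ * h ∈ Subgroup.zpowers a := QuotientGroup.eq.mp (houtmk _)
    obtain ⟨nn, hn0⟩ := hmem
    have hn : a ^ nn = r0⁻¹ * h := hn0
    rcases zpow_invol16 ha nn with h1 | h1
    · have hrh : r0 = h := by
        rw [h1] at hn
        exact inv_mul_eq_one.mp hn.symm
      have hne : r0 ≠ h * a⁻¹ := by
        rw [hrh]
        intro hcon
        apply ha1
        rw [← hainv]
        have : h * 1 = h * a⁻¹ := by rw [mul_one]; exact hcon
        exact (mul_left_cancel this).symm
      rw [if_pos hrh, if_neg hne, mul_one, mul_zero, zero_add, hrh, hainv]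
    · have hrh : h = r0 * a := by
        rw [← h1, hn, ← mul_assoc, mul_inv_cancel, one_mul]
      have hc1 : r0 = h * a⁻¹ := by rw [hrh, mul_assoc, mul_inv_cancel, mul_one]
      have hne : r0 ≠ h := by
        rw [hrh]
        intro hcon
        apply ha1
        have : r0 * 1 = r0 * a := by rw [mul_one]; exact hcon
        exact (mul_left_cancel this).symm
      rw [if_pos hc1, if_neg hne, mul_one, mul_zero, add_zero, hc1]
  · intro c _ hne
    have h1 : Quotient.out c ≠ h := fun hc => hne (by rw [← houtmk c, hc])
    have h2 : Quotient.out c ≠ h * a⁻¹ := fun hc => hne (by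
      rw [← houtmk c, hc]
      refine QuotientGroup.eq.mpr ?_
      rw [mul_inv_rev, inv_inv, mul_assoc, inv_mul_cancel, mul_one]
      exact Subgroup.mem_zpowers a)
    rw [if_neg h2, if_neg h1, mul_zero, mul_zero, add_zero]
  · intro hcon
    exact absurd (Finset.mem_univ _) hcon

end helpers16

/-- A basis of the `σ`-invariant elements of `E_G(kG)`, char 2: `r(1)`, `r(tᵢ)` for the
involutions `tᵢ`, and `r(gⱼ + gⱼ⁻¹)` for the pairs of remaining non-identity elements;
`r(1)` and `r(gⱼ+gⱼ⁻¹)` are traces from the trivial subgroup of `σ`-invariant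
endomorphisms, and `r(tᵢ) = tr_{⟨tᵢ⟩}^G (tᵢ⊗1 + 1⊗tᵢ)` with `tᵢ⊗1 + 1⊗tᵢ`
`σ`-invariant. -/


theorem stmt16 {k G : Type*} [Field k] [CharP k 2] [Group G] [Fintype G]
    (σ : (MonoidAlgebra k G →ₗ[k] MonoidAlgebra k G) →
        (MonoidAlgebra k G →ₗ[k] MonoidAlgebra k G))
    (hσ : ∀ (f : MonoidAlgebra k G →ₗ[k] MonoidAlgebra k G) (u v : MonoidAlgebra k G),
      (∑ g : G, u.coeff g * (f v).coeff g) = ∑ g : G, (σ f u).coeff g * v.coeff g)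
    (m n : ℕ) (t : Fin m → G) (gp : Fin n → G)
    (htinv : ∀ i, t i * t i = 1 ∧ t i ≠ 1)
    (htinj : Function.Injective t)
    (hgp : ∀ j, gp j * gp j ≠ 1)  -- gp j is not an involution
    (hgp1 : ∀ j, gp j ≠ 1)
    (hgpinj : ∀ j j' : Fin n, (gp j = gp j' ∨ gp j = (gp j')⁻¹) → j = j')
    (hcover : ∀ x : G, x = 1 ∨ (∃ i, x = t i) ∨ ∃ j, x = gp j ∨ x = (gp j)⁻¹) :
    -- the basis family
    (let v : Unit ⊕ Fin m ⊕ Fin n → (MonoidAlgebra k G →ₗ[k] MonoidAlgebra k G) :=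
      Sum.elim (fun _ => LinearMap.mulRight k (1 : MonoidAlgebra k G))
        (Sum.elim (fun i => LinearMap.mulRight k (MonoidAlgebra.of k G (t i)))
          (fun j => LinearMap.mulRight k
            (MonoidAlgebra.of k G (gp j) + MonoidAlgebra.of k G (gp j)⁻¹)));
    -- each member is a σ-invariant element of E_G(kG)
    (∀ i, (∀ (x : G) (y : MonoidAlgebra k G),
        v i (MonoidAlgebra.of k G x * y) = MonoidAlgebra.of k G x * v i y) ∧ σ (v i) = v i) ∧
    -- it is linearly independent
    LinearIndependent k v ∧
    -- and spans the σ-invariant elements of E_G(kG)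
    (∀ f : MonoidAlgebra k G →ₗ[k] MonoidAlgebra k G,
      (∀ (x : G) (y : MonoidAlgebra k G),
        f (MonoidAlgebra.of k G x * y) = MonoidAlgebra.of k G x * f y) →
      σ f = f → f ∈ Submodule.span k (Set.range v))) ∧
    -- r(1) is (1,σ)-projective
    (∃ F, σ F = F ∧
      (∑ g : G, (LinearMap.mulLeft k (MonoidAlgebra.of k G g)) ∘ₗ F ∘ₗ
          (LinearMap.mulLeft k (MonoidAlgebra.of k G g⁻¹))) =
        LinearMap.mulRight k (1 : MonoidAlgebra k G)) ∧
    -- each r(gⱼ+gⱼ⁻¹) is (1,σ)-projective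
    (∀ j : Fin n, ∃ F, σ F = F ∧
      (∑ g : G, (LinearMap.mulLeft k (MonoidAlgebra.of k G g)) ∘ₗ F ∘ₗ
          (LinearMap.mulLeft k (MonoidAlgebra.of k G g⁻¹))) =
        LinearMap.mulRight k
          (MonoidAlgebra.of k G (gp j) + MonoidAlgebra.of k G (gp j)⁻¹)) ∧
    -- r(tᵢ) = tr_{⟨tᵢ⟩}^G (tᵢ⊗1 + 1⊗tᵢ), with tᵢ⊗1 + 1⊗tᵢ σ-invariant
    (∀ i : Fin m,
      σ (rankOne16 (MonoidAlgebra.of k G (t i)) 1 + rankOne16 1 (MonoidAlgebra.of k G (t i))) =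
        rankOne16 (MonoidAlgebra.of k G (t i)) 1 + rankOne16 1 (MonoidAlgebra.of k G (t i)) ∧
      (∑ c : G ⧸ Subgroup.zpowers (t i),
        (LinearMap.mulLeft k (MonoidAlgebra.of k G (Quotient.out c))) ∘ₗ
          (rankOne16 (MonoidAlgebra.of k G (t i)) 1 +
            rankOne16 1 (MonoidAlgebra.of k G (t i))) ∘ₗ
          (LinearMap.mulLeft k (MonoidAlgebra.of k G (Quotient.out c)⁻¹))) =
        LinearMap.mulRight k (MonoidAlgebra.of k G (t i))) := by
  refine ⟨?_, ?_, ?_, ?_⟩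
  · -- the basis part
    refine ⟨?_, ?_, ?_⟩
    · -- σ-invariant members
      intro i
      rcases i with _ | i | j
      · refine ⟨fun x y => by
          simp only [Sum.elim_inl, LinearMap.mulRight_apply, mul_assoc], ?_⟩
        simp only [Sum.elim_inl]
        apply adj_unique16 σ hσ
        intro u w
        simp only [LinearMap.mulRight_apply]
        rw [MonoidAlgebra.one_def]
        exact sa_single16 1 (one_mul 1) u w
      · refine ⟨fun x y => by
          simp only [Sum.elim_inr, Sum.elim_inl, LinearMap.mulRight_apply, mul_assoc], ?_⟩
        simp only [Sum.elim_inr, Sum.elim_inl]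
        apply adj_unique16 σ hσ
        intro u w
        simp only [LinearMap.mulRight_apply, MonoidAlgebra.of_apply]
        exact sa_single16 (t i) (htinv i).1 u w
      · refine ⟨fun x y => by
          simp only [Sum.elim_inr, LinearMap.mulRight_apply, mul_assoc], ?_⟩
        simp only [Sum.elim_inr]
        apply adj_unique16 σ hσ
        intro u w
        simp only [LinearMap.mulRight_apply, MonoidAlgebra.of_apply]
        exact sa_pair16 (gp j) u w
    · -- linear independence
      rw [Fintype.linearIndependent_iff]
      intro c hc
      have h1 := congrArg (fun F : MonoidAlgebra k G →ₗ[k] MonoidAlgebra k G =>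
        F (1 : MonoidAlgebra k G)) hc
      simp only [LinearMap.sum_apply, LinearMap.smul_apply, LinearMap.zero_apply] at h1
      rw [Fintype.sum_sum_type, Fintype.sum_sum_type] at h1
      simp only [Sum.elim_inl, Sum.elim_inr, LinearMap.mulRight_apply, one_mul,
        MonoidAlgebra.of_apply, Finset.univ_unique, Finset.sum_singleton] at h1
      rw [← add_assoc] at h1
      obtain ⟨e1, e2, e3, e4⟩ := key16 t gp htinv htinj hgp hgp1 hgpinj
        (c (Sum.inl default)) (fun i => c (Sum.inr (Sum.inl i)))
        (fun j => c (Sum.inr (Sum.inr j))) _ rfl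
      intro i
      rcases i with _ | i | j
      · rw [← e1, h1]; rfl
      · rw [← e2 i, h1]; rfl
      · rw [← e3 j, h1]; rfl
    · -- spanning
      intro f hcomm hσf
      have hf : f = LinearMap.mulRight k (f 1) := comm_mulRight16 f hcomm
      have hadj : ∀ u v : MonoidAlgebra k G,
          ∑ g : G, u.coeff g * (f v).coeff g = ∑ g : G, (f u).coeff g * v.coeff g :=
        fun u v => (hσ f u v).trans (by rw [hσf])
      have hsym : ∀ g : G, (f 1).coeff g⁻¹ = (f 1).coeff g := by
        intro g
        have h2 := hadj (MonoidAlgebra.of k G g) 1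
        rw [eval_of16' (f 1) g, eval_one16' (f (MonoidAlgebra.of k G g))] at h2
        have h3 : f (MonoidAlgebra.of k G g) = MonoidAlgebra.of k G g * f 1 := by
          conv_lhs => rw [hf]
          rw [LinearMap.mulRight_apply]
        rw [h3, MonoidAlgebra.of_apply, MonoidAlgebra.single_mul_apply, one_mul,
          mul_one] at h2
        exact h2.symm
      obtain ⟨e1, e2, e3, e4⟩ := key16 t gp htinv htinj hgp hgp1 hgpinj
        ((f 1).coeff 1) (fun i => (f 1).coeff (t i)) (fun j => (f 1).coeff (gp j)) _ rfl
      have hxy : f 1 = (f 1).coeff 1 • (1 : MonoidAlgebra k G)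
          + (∑ i : Fin m, (f 1).coeff (t i) • MonoidAlgebra.single (t i) 1)
          + ∑ j : Fin n, (f 1).coeff (gp j) • (MonoidAlgebra.single (gp j) 1
              + MonoidAlgebra.single (gp j)⁻¹ 1) := by
        refine MonoidAlgebra.ext (Finsupp.ext fun h => ?_)
        rcases hcover h with h0 | ⟨i, hi⟩ | ⟨j, hj | hj⟩
        · rw [h0, e1]
        · rw [hi, e2 i]
        · rw [hj, e3 j]
        · rw [hj, e4 j, hsym (gp j)]
      rw [hf, hxy, mulRight_add16, mulRight_add16, mulRight_smul16,
        mulRight_sum16, mulRight_sum16]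
      refine Submodule.add_mem _ (Submodule.add_mem _ ?_ ?_) ?_
      · exact Submodule.smul_mem _ _ (Submodule.subset_span ⟨Sum.inl (), rfl⟩)
      · refine Submodule.sum_mem _ fun i _ => ?_
        rw [mulRight_smul16]
        refine Submodule.smul_mem _ _ (Submodule.subset_span ⟨Sum.inr (Sum.inl i), ?_⟩)
        simp [MonoidAlgebra.of_apply]
      · refine Submodule.sum_mem _ fun j _ => ?_
        rw [mulRight_smul16]
        refine Submodule.smul_mem _ _ (Submodule.subset_span ⟨Sum.inr (Sum.inr j), ?_⟩)
        simp [MonoidAlgebra.of_apply]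
  · -- r(1) is (1,σ)-projective
    exact ⟨rankOne16 1 1, adj_unique16 σ hσ _ (fun u v => sa_rank1116 u v), tr416⟩
  · -- r(gⱼ+gⱼ⁻¹) is (1,σ)-projective
    intro j
    refine ⟨rankOne16 (MonoidAlgebra.of k G (gp j)) 1
        + rankOne16 1 (MonoidAlgebra.of k G (gp j)),
      adj_unique16 σ hσ _ (fun u v => sa_rankpair16 (MonoidAlgebra.of k G (gp j)) 1 u v), ?_⟩
    have hsplit : ∀ g : G,
        (LinearMap.mulLeft k (MonoidAlgebra.of k G g)) ∘ₗ
          (rankOne16 (MonoidAlgebra.of k G (gp j)) 1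
            + rankOne16 1 (MonoidAlgebra.of k G (gp j))) ∘ₗ
          (LinearMap.mulLeft k (MonoidAlgebra.of k G g⁻¹))
        = ((LinearMap.mulLeft k (MonoidAlgebra.of k G g)) ∘ₗ
            (rankOne16 (MonoidAlgebra.of k G (gp j)) 1) ∘ₗ
            (LinearMap.mulLeft k (MonoidAlgebra.of k G g⁻¹)))
          + ((LinearMap.mulLeft k (MonoidAlgebra.of k G g)) ∘ₗ
            (rankOne16 1 (MonoidAlgebra.of k G (gp j))) ∘ₗ
            (LinearMap.mulLeft k (MonoidAlgebra.of k G g⁻¹))) := fun g => by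
      rw [LinearMap.add_comp, LinearMap.comp_add]
    rw [Finset.sum_congr rfl (fun g _ => hsplit g), Finset.sum_add_distrib,
      trA16, trB16, ← mulRight_add16]
  · -- r(tᵢ)
    intro i
    exact ⟨adj_unique16 σ hσ _
        (fun u v => sa_rankpair16 (MonoidAlgebra.of k G (t i)) 1 u v),
      tr616 (t i) (htinv i).1 (htinv i).2⟩
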